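/- arXiv:1407.4462 — 6 statements merged into one kernel-verified Lean document; each statement's English description precedes it below -/
import Mathlib

section
/- Let σ : ℤ → ℝ be any function and let m ≤ n be natural numbers. Then the double sums (taken in steps of 2) satisfy ∑_{t=-m, step 2}^{m} ∑_{s=-n, step 2}^{n} σ(t+s) = ∑_{t=n-m, step 2}^{n+m} ∑_{s=-t, step 2}^{t} σ(s). -/
/-- Rearrangement of double step-2 sums:
∑_{t=-m, step 2}^{m} ∑_{s=-n, step 2}^{n} σ(t+s)
  = ∑_{t=n-m, step 2}^{n+m} ∑_{s=-t, step 2}^{t} σ(s),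
where the outer sums are indexed by i and the inner by j. -/
theorem step_two_double_sum_rearrangement (σ : ℤ → ℝ) (m n : ℕ) (hmn : m ≤ n) :
    ∑ i ∈ Finset.range (m + 1), ∑ j ∈ Finset.range (n + 1),
        σ ((-(m : ℤ) + 2 * i) + (-(n : ℤ) + 2 * j))
      = ∑ i ∈ Finset.range (m + 1), ∑ j ∈ Finset.range ((n - m + 2 * i) + 1),
          σ (-((n : ℤ) - m + 2 * i) + 2 * j) := by
  rw [Finset.sum_sigma', Finset.sum_sigma']
  refine Finset.sum_nbij'
    (i := fun p => ⟨p.1 + (m - (p.1 + p.2)), p.1 + (p.1 + p.2 - m)⟩)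
    (j := fun p => ⟨min p.1 p.2, m - p.1 + p.2 - min p.1 p.2⟩)
    ?_ ?_ ?_ ?_ ?_
  · rintro ⟨a, b⟩ h
    simp only [Finset.mem_sigma, Finset.mem_range] at h ⊢
    omega
  · rintro ⟨a, b⟩ h
    simp only [Finset.mem_sigma, Finset.mem_range] at h ⊢
    omega
  · rintro ⟨a, b⟩ h
    simp only [Finset.mem_sigma, Finset.mem_range] at h
    simp only [Sigma.mk.inj_iff, heq_eq_eq]
    omega
  · rintro ⟨a, b⟩ h
    simp only [Finset.mem_sigma, Finset.mem_range] at h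
    simp only [Sigma.mk.inj_iff, heq_eq_eq]
    omega
  · rintro ⟨a, b⟩ h
    simp only [Finset.mem_sigma, Finset.mem_range] at h
    congr 1
    push_cast
    omega
end

section
/- Let σ : ℤ → (0,∞) be a submultiplicative weight on ℤ, i.e. σ(s+t) ≤ σ(s)σ(t) for all s,t ∈ ℤ, and define ω_σ(ℓ) := (1/(ℓ+1)) ∑_{r=-ℓ, step 2}^{ℓ} σ(r) for ℓ ∈ ℕ₀. Then for all m ≤ n in ℕ₀, ∑_{t=n-m, step 2}^{n+m} ((t+1)/((m+1)(n+1))) ω_σ(t) ≤ ω_σ(m) ω_σ(n). -/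
/-- Auxiliary function: the first coordinate of the injection used in the proof of
`averaged_weight_is_hypergroup_weight`. -/
def hypWeightAux (m n a i : ℕ) : ℕ := min m a - (i - max (m - a) (a - n))

lemma hypWeightAux_facts (m n a i : ℕ) (hmn : m ≤ n) (hi : i ≤ m)
    (h1 : m - a ≤ i) (h2 : a - n ≤ i) :
    hypWeightAux m n a i ≤ m ∧ hypWeightAux m n a i ≤ a ∧ a - hypWeightAux m n a i ≤ n := by
  unfold hypWeightAux; omega

lemma hypWeightAux_inj (m n a i i₂ : ℕ) (hmn : m ≤ n) (hi : i ≤ m) (hi₂ : i₂ ≤ m)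
    (h1 : m - a ≤ i) (h2 : a - n ≤ i) (h1' : m - a ≤ i₂) (h2' : a - n ≤ i₂)
    (heq : hypWeightAux m n a i = hypWeightAux m n a i₂) : i = i₂ := by
  unfold hypWeightAux at heq; omega

/-- If σ is a submultiplicative weight on ℤ and
ω_σ(ℓ) = (1/(ℓ+1)) ∑_{r=-ℓ, step 2}^{ℓ} σ(r), then for m ≤ n,
∑_{t=n-m, step 2}^{n+m} ((t+1)/((m+1)(n+1))) ω_σ(t) ≤ ω_σ(m) ω_σ(n). -/
theorem averaged_weight_is_hypergroup_weight (σ : ℤ → ℝ)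
    (hσpos : ∀ s : ℤ, 0 < σ s) (hσ : ∀ s t : ℤ, σ (s + t) ≤ σ s * σ t)
    (ω : ℕ → ℝ)
    (hω : ∀ ℓ : ℕ, ω ℓ = (1 / ((ℓ : ℝ) + 1)) *
      ∑ i ∈ Finset.range (ℓ + 1), σ (-(ℓ : ℤ) + 2 * i))
    (m n : ℕ) (hmn : m ≤ n) :
    ∑ i ∈ Finset.range (m + 1),
        (((n - m + 2 * i : ℕ) + 1 : ℝ) / (((m : ℝ) + 1) * ((n : ℝ) + 1))) * ω (n - m + 2 * i)
      ≤ ω m * ω n := by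
  set S : ℕ → ℝ := fun ℓ => ∑ i ∈ Finset.range (ℓ + 1), σ (-(ℓ : ℤ) + 2 * i) with hS
  set e : (Σ _ : ℕ, ℕ) → ℕ × ℕ := fun x =>
    (hypWeightAux m n (m - x.1 + x.2) x.1,
     (m - x.1 + x.2) - hypWeightAux m n (m - x.1 + x.2) x.1) with he
  set A : Finset (Σ _ : ℕ, ℕ) :=
    (Finset.range (m + 1)).sigma (fun i => Finset.range (n - m + 2 * i + 1)) with hA
  set B : Finset (ℕ × ℕ) := Finset.range (m + 1) ×ˢ Finset.range (n + 1) with hB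
  have hmemA : ∀ x ∈ A, x.1 ≤ m ∧ x.2 ≤ n - m + 2 * x.1 := by
    intro x hx
    rw [hA, Finset.mem_sigma, Finset.mem_range, Finset.mem_range] at hx
    omega
  -- basic facts about the injection on A
  have hfacts : ∀ x ∈ A, (e x).1 ≤ m ∧ (e x).2 ≤ n ∧ (e x).1 + (e x).2 = m - x.1 + x.2 := by
    intro x hx
    obtain ⟨hx1, hx2⟩ := hmemA x hx
    have h1 : m - (m - x.1 + x.2) ≤ x.1 := by omega
    have h2 : (m - x.1 + x.2) - n ≤ x.1 := by omega
    obtain ⟨f1, f2, f3⟩ := hypWeightAux_facts m n (m - x.1 + x.2) x.1 hmn hx1 h1 h2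
    have hex : e x = (hypWeightAux m n (m - x.1 + x.2) x.1,
        (m - x.1 + x.2) - hypWeightAux m n (m - x.1 + x.2) x.1) := rfl
    rw [hex]
    exact ⟨f1, f3, by omega⟩
  have key : ∑ i ∈ Finset.range (m + 1), S (n - m + 2 * i) ≤ S m * S n := by
    have expand : S m * S n = ∑ p ∈ B, σ (-(m : ℤ) + 2 * p.1) * σ (-(n : ℤ) + 2 * p.2) := by
      rw [hS, Finset.sum_mul_sum, hB, Finset.sum_product]
    have lhs_eq : ∑ i ∈ Finset.range (m + 1), S (n - m + 2 * i)
        = ∑ x ∈ A, σ (-((n - m + 2 * x.1 : ℕ) : ℤ) + 2 * x.2) := by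
      rw [hA, Finset.sum_sigma]
    rw [expand, lhs_eq]
    have hinj : ∀ x ∈ A, ∀ y ∈ A, e x = e y → x = y := by
      intro x hx y hy hxy
      obtain ⟨hx1, hx2⟩ := hmemA x hx
      obtain ⟨hy1, hy2⟩ := hmemA y hy
      obtain ⟨fx1, fx2, fx3⟩ := hfacts x hx
      obtain ⟨fy1, fy2, fy3⟩ := hfacts y hy
      have h1 : (e x).1 = (e y).1 := by rw [hxy]
      have h2 : (e x).2 = (e y).2 := by rw [hxy]
      -- the "total degree" is preserved, hence equal
      have ha : m - x.1 + x.2 = m - y.1 + y.2 := by omega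
      obtain ⟨i, k⟩ := x
      obtain ⟨i₂, k₂⟩ := y
      simp only at hx1 hx2 hy1 hy2 ha ⊢
      have h1' : hypWeightAux m n (m - i + k) i = hypWeightAux m n (m - i₂ + k₂) i₂ := by
        rw [he] at h1; exact h1
      rw [← ha] at h1'
      have hii : i = i₂ :=
        hypWeightAux_inj m n (m - i + k) i i₂ hmn hx1 hy1 (by omega) (by omega)
          (by omega) (by omega) h1'
      subst hii
      have : k = k₂ := by omega
      simp [this]
    calc ∑ x ∈ A, σ (-((n - m + 2 * x.1 : ℕ) : ℤ) + 2 * x.2)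
        ≤ ∑ x ∈ A, σ (-(m : ℤ) + 2 * (e x).1) * σ (-(n : ℤ) + 2 * (e x).2) := by
          apply Finset.sum_le_sum
          intro x hx
          obtain ⟨hx1, hx2⟩ := hmemA x hx
          have h1 : m - (m - x.1 + x.2) ≤ x.1 := by omega
          have h2 : (m - x.1 + x.2) - n ≤ x.1 := by omega
          obtain ⟨f1, f2, f3⟩ := hypWeightAux_facts m n (m - x.1 + x.2) x.1 hmn hx1 h1 h2
          show σ (-((n - m + 2 * x.1 : ℕ) : ℤ) + 2 * x.2)
            ≤ σ (-(m : ℤ) + 2 * (hypWeightAux m n (m - x.1 + x.2) x.1 : ℕ)) *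
              σ (-(n : ℤ) + 2 * ((m - x.1 + x.2 - hypWeightAux m n (m - x.1 + x.2) x.1 : ℕ)))
          have harg : (-((n - m + 2 * x.1 : ℕ) : ℤ) + 2 * x.2)
              = (-(m : ℤ) + 2 * (hypWeightAux m n (m - x.1 + x.2) x.1 : ℕ))
                + (-(n : ℤ) + 2 * ((m - x.1 + x.2 - hypWeightAux m n (m - x.1 + x.2) x.1 : ℕ))) := by
            omega
          rw [harg]
          exact hσ _ _
      _ = ∑ p ∈ A.image e, σ (-(m : ℤ) + 2 * p.1) * σ (-(n : ℤ) + 2 * p.2) := by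
          rw [Finset.sum_image hinj]
      _ ≤ ∑ p ∈ B, σ (-(m : ℤ) + 2 * p.1) * σ (-(n : ℤ) + 2 * p.2) := by
          apply Finset.sum_le_sum_of_subset_of_nonneg
          · intro p hp
            rw [Finset.mem_image] at hp
            obtain ⟨x, hx, hex⟩ := hp
            obtain ⟨f1, f2, f3⟩ := hfacts x hx
            rw [hB, Finset.mem_product, Finset.mem_range, Finset.mem_range]
            rw [← hex]
            omega
          · intro p _ _
            exact le_of_lt (mul_pos (hσpos _) (hσpos _))
  -- now reduce the goal to `key`
  have hterm : ∀ i ∈ Finset.range (m + 1),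
      (((n - m + 2 * i : ℕ) + 1 : ℝ) / (((m : ℝ) + 1) * ((n : ℝ) + 1))) * ω (n - m + 2 * i)
      = (1 / (((m : ℝ) + 1) * ((n : ℝ) + 1))) * S (n - m + 2 * i) := by
    intro i _
    have hωS : ω (n - m + 2 * i)
        = (1 / (((n - m + 2 * i : ℕ) : ℝ) + 1)) * S (n - m + 2 * i) := hω _
    rw [hωS]
    have h1 : ((n - m + 2 * i : ℕ) : ℝ) + 1 ≠ 0 := by positivity
    calc (((n - m + 2 * i : ℕ) + 1 : ℝ) / (((m : ℝ) + 1) * ((n : ℝ) + 1))) *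
          ((1 / (((n - m + 2 * i : ℕ) : ℝ) + 1)) * S (n - m + 2 * i))
        = ((((n - m + 2 * i : ℕ) : ℝ) + 1) * (1 / (((n - m + 2 * i : ℕ) : ℝ) + 1))) *
          ((1 / (((m : ℝ) + 1) * ((n : ℝ) + 1))) * S (n - m + 2 * i)) := by ring
      _ = (1 / (((m : ℝ) + 1) * ((n : ℝ) + 1))) * S (n - m + 2 * i) := by
          rw [mul_one_div_cancel h1, one_mul]
  have hωm : ω m = 1 / ((m : ℝ) + 1) * S m := hω m
  have hωn : ω n = 1 / ((n : ℝ) + 1) * S n := hω n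
  rw [Finset.sum_congr rfl hterm, ← Finset.mul_sum, hωm, hωn]
  have hrhs : (1 / ((m : ℝ) + 1) * S m) * (1 / ((n : ℝ) + 1) * S n)
      = (1 / (((m : ℝ) + 1) * ((n : ℝ) + 1))) * (S m * S n) := by
    rw [← one_div_mul_one_div]; ring
  rw [hrhs]
  apply mul_le_mul_of_nonneg_left key
  positivity
end

section
/- Fix β > 0 and define σ : ℤ → ℝ by σ(ℓ) = 1 for ℓ ≥ 0 and σ(ℓ) = (1-ℓ)^β for ℓ < 0. Then the function ω_σ(ℓ) := (1/(ℓ+1)) ∑_{r=-ℓ, step 2}^{ℓ} σ(r) on ℕ₀ is equivalent to ω_β(ℓ) := (1+ℓ)^β, i.e. there exist constants c₁, c₂ > 0 with c₁ (1+ℓ)^β ≤ ω_σ(ℓ) ≤ c₂ (1+ℓ)^β for all ℓ ∈ ℕ₀. -/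
/-- For β > 0 and σ(ℓ) = 1 (ℓ ≥ 0), σ(ℓ) = (1-ℓ)^β (ℓ < 0), the averaged weight
ω_σ(ℓ) = (1/(ℓ+1)) ∑_{r=-ℓ, step 2}^{ℓ} σ(r) is equivalent to (1+ℓ)^β. -/
theorem lifted_weight_equivalent_to_dimension_weight (β : ℝ) (hβ : 0 < β)
    (σ : ℤ → ℝ)
    (hσ : ∀ ℓ : ℤ, σ ℓ = if 0 ≤ ℓ then 1 else ((1 : ℝ) - ℓ) ^ β)
    (ω : ℕ → ℝ)
    (hω : ∀ ℓ : ℕ, ω ℓ = (1 / ((ℓ : ℝ) + 1)) *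
      ∑ i ∈ Finset.range (ℓ + 1), σ (-(ℓ : ℤ) + 2 * i)) :
    ∃ c₁ c₂ : ℝ, 0 < c₁ ∧ 0 < c₂ ∧
      ∀ ℓ : ℕ, c₁ * (1 + (ℓ : ℝ)) ^ β ≤ ω ℓ ∧ ω ℓ ≤ c₂ * (1 + (ℓ : ℝ)) ^ β := by
  have h2β : (0:ℝ) < (2:ℝ) ^ β := Real.rpow_pos_of_pos two_pos β
  refine ⟨1 / (4 * (2:ℝ) ^ β), 1, by positivity, one_pos, fun ℓ => ?_⟩
  have hℓ1 : (0:ℝ) < (ℓ:ℝ) + 1 := by positivity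
  have hbase : (0:ℝ) < 1 + (ℓ:ℝ) := by positivity
  have hnn : ∀ i ∈ Finset.range (ℓ + 1), 0 ≤ σ (-(ℓ:ℤ) + 2 * i) := by
    intro i _
    rw [hσ]
    split_ifs with h
    · exact zero_le_one
    · apply Real.rpow_nonneg
      have h1 : (-(ℓ:ℤ) + 2 * i) ≤ 1 := by omega
      have h2 : ((-(ℓ:ℤ) + 2 * i : ℤ) : ℝ) ≤ 1 := by exact_mod_cast h1
      push_cast at h2 ⊢
      linarith
  rw [hω]
  constructor
  · -- lower bound
    have hsub : Finset.range (ℓ/4 + 1) ⊆ Finset.range (ℓ + 1) :=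
      Finset.range_subset_range.2 (by omega)
    have hterm : ∀ i ∈ Finset.range (ℓ/4 + 1),
        ((1 + (ℓ:ℝ))/2) ^ β ≤ σ (-(ℓ:ℤ) + 2 * i) := by
      intro i hi
      have hi' : i ≤ ℓ/4 := Finset.mem_range_succ_iff.mp hi
      rw [hσ]
      rcases Nat.eq_zero_or_pos ℓ with h0 | hpos
      · subst h0
        have hi0 : i = 0 := by omega
        subst hi0
        norm_num
        calc ((1:ℝ)/2) ^ β ≤ 1 ^ β :=
              Real.rpow_le_rpow (by norm_num) (by norm_num) hβ.le
          _ = 1 := Real.one_rpow β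
      · have hr : ¬ (0 ≤ -(ℓ:ℤ) + 2 * i) := by omega
        rw [if_neg hr]
        apply Real.rpow_le_rpow (by positivity) _ hβ.le
        have h4i : 4 * i ≤ ℓ := by omega
        have h4i' : (4:ℝ) * i ≤ ℓ := by exact_mod_cast h4i
        push_cast
        linarith
    have hcard : ((ℓ:ℝ) + 1)/4 ≤ ((ℓ/4 + 1 : ℕ) : ℝ) := by
      have : ℓ + 1 ≤ 4 * (ℓ/4 + 1) := by omega
      have := (Nat.cast_le (α := ℝ)).mpr this
      push_cast at this ⊢
      linarith
    have hS : ((ℓ:ℝ) + 1)/4 * ((1 + (ℓ:ℝ))/2) ^ β ≤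
        ∑ i ∈ Finset.range (ℓ + 1), σ (-(ℓ:ℤ) + 2 * i) := by
      calc ((ℓ:ℝ) + 1)/4 * ((1 + (ℓ:ℝ))/2) ^ β
          ≤ ((ℓ/4 + 1 : ℕ) : ℝ) * ((1 + (ℓ:ℝ))/2) ^ β := by
            apply mul_le_mul_of_nonneg_right hcard (Real.rpow_nonneg (by positivity) β)
        _ ≤ ∑ i ∈ Finset.range (ℓ/4 + 1), σ (-(ℓ:ℤ) + 2 * i) := by
            have := Finset.card_nsmul_le_sum (Finset.range (ℓ/4 + 1)) _ _ hterm
            simpa [nsmul_eq_mul] using this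
        _ ≤ ∑ i ∈ Finset.range (ℓ + 1), σ (-(ℓ:ℤ) + 2 * i) :=
            Finset.sum_le_sum_of_subset_of_nonneg hsub (fun i hi _ => hnn i hi)
    rw [Real.div_rpow hbase.le (by norm_num)] at hS
    have h2 : 1 / (4 * (2:ℝ) ^ β) * (1 + (ℓ:ℝ)) ^ β * ((ℓ:ℝ) + 1) ≤
        ∑ i ∈ Finset.range (ℓ + 1), σ (-(ℓ:ℤ) + 2 * i) := by
      calc 1 / (4 * (2:ℝ) ^ β) * (1 + (ℓ:ℝ)) ^ β * ((ℓ:ℝ) + 1)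
          = ((ℓ:ℝ) + 1)/4 * ((1 + (ℓ:ℝ)) ^ β / (2:ℝ) ^ β) := by
            field_simp
        _ ≤ _ := hS
    calc 1 / (4 * (2:ℝ) ^ β) * (1 + (ℓ:ℝ)) ^ β
        = (1 / ((ℓ:ℝ) + 1)) * (1 / (4 * (2:ℝ) ^ β) * (1 + (ℓ:ℝ)) ^ β * ((ℓ:ℝ) + 1)) := by
          field_simp
      _ ≤ (1 / ((ℓ:ℝ) + 1)) * ∑ i ∈ Finset.range (ℓ + 1), σ (-(ℓ:ℤ) + 2 * i) :=
          mul_le_mul_of_nonneg_left h2 (by positivity)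
  · -- upper bound
    have hterm : ∀ i ∈ Finset.range (ℓ + 1),
        σ (-(ℓ:ℤ) + 2 * i) ≤ (1 + (ℓ:ℝ)) ^ β := by
      intro i _
      rw [hσ]
      split
      · calc (1:ℝ) = (1:ℝ) ^ β := (Real.one_rpow β).symm
          _ ≤ (1 + (ℓ:ℝ)) ^ β :=
            Real.rpow_le_rpow zero_le_one (by linarith [Nat.cast_nonneg (α := ℝ) ℓ]) hβ.le
      · have h1 : (-(ℓ:ℤ) + 2 * i) ≤ 1 := by omega
        have h2 : ((-(ℓ:ℤ) + 2 * i : ℤ) : ℝ) ≤ 1 := by exact_mod_cast h1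
        apply Real.rpow_le_rpow (by push_cast at h2 ⊢; linarith) _ hβ.le
        push_cast
        have : (0:ℝ) ≤ (i:ℝ) := Nat.cast_nonneg i
        linarith
    have hS : ∑ i ∈ Finset.range (ℓ + 1), σ (-(ℓ:ℤ) + 2 * i) ≤
        ((ℓ:ℝ) + 1) * (1 + (ℓ:ℝ)) ^ β := by
      calc ∑ i ∈ Finset.range (ℓ + 1), σ (-(ℓ:ℤ) + 2 * i)
          ≤ ∑ _i ∈ Finset.range (ℓ + 1), (1 + (ℓ:ℝ)) ^ β := Finset.sum_le_sum hterm
        _ = ((ℓ:ℝ) + 1) * (1 + (ℓ:ℝ)) ^ β := by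
            rw [Finset.sum_const, Finset.card_range, nsmul_eq_mul]; push_cast; ring
    calc (1 / ((ℓ:ℝ) + 1)) * ∑ i ∈ Finset.range (ℓ + 1), σ (-(ℓ:ℤ) + 2 * i)
        ≤ (1 / ((ℓ:ℝ) + 1)) * (((ℓ:ℝ) + 1) * (1 + (ℓ:ℝ)) ^ β) :=
          mul_le_mul_of_nonneg_left hS (by positivity)
      _ = 1 * (1 + (ℓ:ℝ)) ^ β := by field_simp
end

section
/- Let X be a set, ω : X → (0,∞) with ∑_{x∈X} 1/ω(x)² < ∞, and suppose Ω : X × X → ℂ satisfies |Ω(x,y)| ≤ C·(1/ω(x) + 1/ω(y)) for some constant C > 0 and all x, y. Then Ω ∈ T²(X) with ‖Ω‖_{T²(X)} ≤ 2C·(∑_{x∈X} 1/ω(x)²)^{1/2}. -/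
/-- If ∑ 1/ω(x)² < ∞ and |Ω(x,y)| ≤ C(1/ω(x) + 1/ω(y)), then Ω is a Littlewood
multiplier with ‖Ω‖_{T²} ≤ 2C(∑ 1/ω(x)²)^{1/2}. -/
theorem weakly_additive_littlewood {X : Type*}
    (ω : X → ℝ) (hωpos : ∀ x, 0 < ω x)
    (hS : Summable fun x => 1 / (ω x) ^ 2)
    (Ω : X → X → ℂ) (C : ℝ) (hC : 0 < C)
    (hΩ : ∀ x y, ‖Ω x y‖ ≤ C * (1 / ω x + 1 / ω y)) :
    ∃ f₁ f₂ : X → X → ℂ,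
      (∀ x y, Ω x y = f₁ x y + f₂ x y) ∧
      (∀ y, Summable fun x => ‖f₁ x y‖ ^ 2) ∧
      (∀ x, Summable fun y => ‖f₂ x y‖ ^ 2) ∧
      (∀ y, ∑' x, ‖f₁ x y‖ ^ 2 ≤ C ^ 2 * ∑' x, 1 / (ω x) ^ 2) ∧
      (∀ x, ∑' y, ‖f₂ x y‖ ^ 2 ≤ C ^ 2 * ∑' x, 1 / (ω x) ^ 2) := by
  set a : X → X → ℝ := fun x y => (1 / ω x) / (1 / ω x + 1 / ω y) with ha
  have hωinv : ∀ x, 0 < 1 / ω x := fun x => one_div_pos.mpr (hωpos x)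
  have hden : ∀ x y, 0 < 1 / ω x + 1 / ω y := fun x y =>
    add_pos (hωinv x) (hωinv y)
  have ha_nonneg : ∀ x y, 0 ≤ a x y := fun x y =>
    div_nonneg (hωinv x).le (hden x y).le
  have ha_mul : ∀ x y, a x y * (1 / ω x + 1 / ω y) = 1 / ω x := fun x y =>
    div_mul_cancel₀ _ (hden x y).ne'
  have ha_sum : ∀ x y, a x y + a y x = 1 := by
    intro x y
    simp only [ha]
    rw [add_comm (1 / ω y) (1 / ω x), ← add_div, div_self (hden x y).ne']
  -- bound for the first piece
  have key₁ : ∀ x y, ‖(a x y : ℂ) * Ω x y‖ ^ 2 ≤ C ^ 2 * (1 / ω x ^ 2) := by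
    intro x y
    have h1 : ‖(a x y : ℂ) * Ω x y‖ ≤ C * (1 / ω x) := by
      rw [norm_mul, Complex.norm_real, Real.norm_of_nonneg (ha_nonneg x y)]
      calc a x y * ‖Ω x y‖ ≤ a x y * (C * (1 / ω x + 1 / ω y)) :=
            mul_le_mul_of_nonneg_left (hΩ x y) (ha_nonneg x y)
        _ = C * (a x y * (1 / ω x + 1 / ω y)) := by ring
        _ = C * (1 / ω x) := by rw [ha_mul]
    calc ‖(a x y : ℂ) * Ω x y‖ ^ 2 ≤ (C * (1 / ω x)) ^ 2 :=
          pow_le_pow_left₀ (norm_nonneg _) h1 2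
      _ = C ^ 2 * (1 / ω x ^ 2) := by rw [mul_pow, div_pow, one_pow]
  -- bound for the second piece
  have key₂ : ∀ x y, ‖(a y x : ℂ) * Ω x y‖ ^ 2 ≤ C ^ 2 * (1 / ω y ^ 2) := by
    intro x y
    have h1 : ‖(a y x : ℂ) * Ω x y‖ ≤ C * (1 / ω y) := by
      rw [norm_mul, Complex.norm_real, Real.norm_of_nonneg (ha_nonneg y x)]
      calc a y x * ‖Ω x y‖ ≤ a y x * (C * (1 / ω x + 1 / ω y)) :=
            mul_le_mul_of_nonneg_left (hΩ x y) (ha_nonneg y x)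
        _ = C * (a y x * (1 / ω y + 1 / ω x)) := by ring
        _ = C * (1 / ω y) := by rw [ha_mul]
    calc ‖(a y x : ℂ) * Ω x y‖ ^ 2 ≤ (C * (1 / ω y)) ^ 2 :=
          pow_le_pow_left₀ (norm_nonneg _) h1 2
      _ = C ^ 2 * (1 / ω y ^ 2) := by rw [mul_pow, div_pow, one_pow]
  have hsum₁ : ∀ y, Summable fun x => ‖(a x y : ℂ) * Ω x y‖ ^ 2 := fun y =>
    Summable.of_nonneg_of_le (fun x => by positivity) (fun x => key₁ x y) (hS.mul_left _)
  have hsum₂ : ∀ x, Summable fun y => ‖(a y x : ℂ) * Ω x y‖ ^ 2 := fun x =>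
    Summable.of_nonneg_of_le (fun y => by positivity) (fun y => key₂ x y) (hS.mul_left _)
  refine ⟨fun x y => (a x y : ℂ) * Ω x y, fun x y => (a y x : ℂ) * Ω x y,
    ?_, hsum₁, hsum₂, ?_, ?_⟩
  · intro x y
    rw [← add_mul, ← Complex.ofReal_add, ha_sum, Complex.ofReal_one, one_mul]
  · intro y
    calc ∑' x, ‖(a x y : ℂ) * Ω x y‖ ^ 2 ≤ ∑' x, C ^ 2 * (1 / ω x ^ 2) :=
          Summable.tsum_le_tsum (fun x => key₁ x y) (hsum₁ y) (hS.mul_left _)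
      _ = C ^ 2 * ∑' x, 1 / ω x ^ 2 := tsum_mul_left
  · intro x
    calc ∑' y, ‖(a y x : ℂ) * Ω x y‖ ^ 2 ≤ ∑' y, C ^ 2 * (1 / ω y ^ 2) :=
          Summable.tsum_le_tsum (fun y => key₂ x y) (hsum₂ x) (hS.mul_left _)
      _ = C ^ 2 * ∑' y, 1 / ω y ^ 2 := tsum_mul_left
end

section
/- Let f : ℕ₀ → (0,∞) be increasing with f(0) = 1, and suppose f(n+m)/(f(n)f(m)) → 0 as n, m → ∞ (along cofinite sets in each variable). Then the function Ω(n,m) := ((1/2)(f(|n-m|)+2) + (1/2)(f(n+m)+2)) / ((f(n)+2)(f(m)+2)) 0-clusters strongly on ℕ₀ × ℕ₀, i.e. lim_{n→∞} limsup_{m→∞} Ω(n,m) = lim_{m→∞} limsup_{n→∞} Ω(n,m) = 0. -/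
/-- If a doubly-indexed nonnegative function tends to 0 along the product of
cofinite filters, then its iterated limsup tends to 0. -/
lemma aux_cluster (u : ℕ → ℕ → ℝ) (hpos : ∀ n m, 0 ≤ u n m)
    (h : Filter.Tendsto (fun p : ℕ × ℕ => u p.1 p.2)
      (Filter.cofinite ×ˢ Filter.cofinite) (nhds 0)) :
    Filter.Tendsto (fun n => Filter.limsup (fun m => u n m) Filter.cofinite)
      Filter.cofinite (nhds 0) := by
  rw [Metric.tendsto_nhds]
  intro ε hε
  have hε2 : 0 < ε / 2 := by linarith
  have hev : ∀ᶠ p : ℕ × ℕ in Filter.cofinite ×ˢ Filter.cofinite, u p.1 p.2 ≤ ε / 2 := by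
    have := Metric.tendsto_nhds.mp h (ε / 2) hε2
    filter_upwards [this] with p hp
    rw [Real.dist_eq, sub_zero] at hp
    exact le_of_lt (lt_of_abs_lt hp)
  rw [Filter.eventually_prod_iff] at hev
  obtain ⟨pa, hpa, pb, hpb, hab⟩ := hev
  filter_upwards [hpa] with n hn
  have hub : ∀ᶠ m in Filter.cofinite, u n m ≤ ε / 2 := by
    filter_upwards [hpb] with m hm
    exact hab hn hm
  have h1 : Filter.limsup (fun m => u n m) Filter.cofinite ≤ ε / 2 :=
    Filter.limsup_le_of_le (Filter.isCoboundedUnder_le_of_le _ (fun m => hpos n m)) hub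
  have h2 : (0 : ℝ) ≤ Filter.limsup (fun m => u n m) Filter.cofinite :=
    Filter.le_limsup_of_frequently_le
      (Filter.Frequently.of_forall (fun m => hpos n m)) ⟨ε / 2, hub⟩
  rw [Real.dist_eq, sub_zero, abs_of_nonneg h2]
  linarith

/-- If f(n+m)/(f(n)f(m)) → 0 as n,m → ∞, then the ratio
Ω(n,m) = ω(δ_n*δ_m)/(ω(n)ω(m)) for ω(n) = f(n)+2 on the Chebyshev hypergroup
0-clusters strongly. -/
theorem chebyshev_zero_clusters (f : ℕ → ℝ) (hfpos : ∀ n, 0 < f n)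
    (hfmono : Monotone f) (hf0 : f 0 = 1)
    (hlim : Filter.Tendsto (fun p : ℕ × ℕ => f (p.1 + p.2) / (f p.1 * f p.2))
      (Filter.cofinite ×ˢ Filter.cofinite) (nhds 0))
    (Ω : ℕ → ℕ → ℝ)
    (hΩ : ∀ n m, Ω n m =
      ((1 / 2) * (f ((n : ℤ) - m).natAbs + 2) + (1 / 2) * (f (n + m) + 2)) /
        ((f n + 2) * (f m + 2))) :
    Filter.Tendsto (fun n => Filter.limsup (fun m => Ω n m) Filter.cofinite)
        Filter.cofinite (nhds 0) ∧
    Filter.Tendsto (fun m => Filter.limsup (fun n => Ω n m) Filter.cofinite)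
        Filter.cofinite (nhds 0) := by
  have hf1 : ∀ n, 1 ≤ f n := fun n => hf0 ▸ hfmono (Nat.zero_le n)
  have hnonneg : ∀ n m, 0 ≤ Ω n m := by
    intro n m
    rw [hΩ]
    apply div_nonneg
    · have h1 := (hfpos ((n : ℤ) - m).natAbs).le
      have h2 := (hfpos (n + m)).le
      nlinarith
    · have h1 := (hfpos n).le
      have h2 := (hfpos m).le
      nlinarith
  have hbound : ∀ n m, Ω n m ≤ 3 * (f (n + m) / (f n * f m)) := by
    intro n m
    rw [hΩ]
    have hd : 0 < (f n + 2) * (f m + 2) := by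
      have := hfpos n; have := hfpos m; nlinarith
    have hdd : 0 < f n * f m := mul_pos (hfpos n) (hfpos m)
    have hfle : f ((n : ℤ) - m).natAbs ≤ f (n + m) := by
      apply hfmono
      omega
    rw [div_le_iff₀ hd]
    have key : 3 * f (n + m) ≤ 3 * (f (n + m) / (f n * f m)) * ((f n + 2) * (f m + 2)) := by
      rw [mul_assoc, div_mul_eq_mul_div, mul_div_assoc]
      have h4 : (1 : ℝ) ≤ ((f n + 2) * (f m + 2)) / (f n * f m) := by
        rw [le_div_iff₀ hdd]
        have := hfpos n; have := hfpos m; nlinarith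
      nlinarith [hfpos (n + m)]
    have h1 := hf1 (n + m)
    linarith
  have hprod : Filter.Tendsto (fun p : ℕ × ℕ => 3 * (f (p.1 + p.2) / (f p.1 * f p.2)))
      (Filter.cofinite ×ˢ Filter.cofinite) (nhds 0) := by
    have := hlim.const_mul (3 : ℝ)
    simpa using this
  constructor
  · apply aux_cluster _ hnonneg
    exact squeeze_zero (fun p => hnonneg p.1 p.2) (fun p => hbound p.1 p.2) hprod
  · apply aux_cluster (fun m n => Ω n m) (fun m n => hnonneg n m)
    apply squeeze_zero (fun p => hnonneg p.2 p.1) (fun p : ℕ × ℕ => ?_) hprod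
    have := hbound p.2 p.1
    rwa [Nat.add_comm p.2 p.1, mul_comm (f p.2) (f p.1)] at this
end

section
/- For the Chebyshev hypergroup on ℕ₀ (with convolution δ_n * δ_m = (1/2)δ_{|n-m|} + (1/2)δ_{n+m}) and the polynomial weight ω_β(n) = (1+n)^β with β > 1, the quantity Ω(n,m) = ω_β(δ_n*δ_m)/(ω_β(n)ω_β(m)) satisfies Ω(n,m) ≤ C·(1/(1+n)^β + 1/(1+m)^β) for C = max{1, 2^{β-1}}, and moreover ∑_{n∈ℕ₀} 1/(1+n)^{2β} < ∞. -/
lemma aux_rpow_add_le (x y : ℝ) (hx : 0 ≤ x) (hy : 0 ≤ y) {p : ℝ} (hp : 1 ≤ p) :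
    (x + y) ^ p ≤ 2 ^ (p - 1) * (x ^ p + y ^ p) := by
  have h := NNReal.rpow_add_le_mul_rpow_add_rpow ⟨x, hx⟩ ⟨y, hy⟩ hp
  have := NNReal.coe_le_coe.2 h
  push_cast at this
  exact this

/-- For the Chebyshev hypergroup and the polynomial weight ω_β(n) = (1+n)^β with
β > 1: Ω(n,m) = ω_β(δ_n*δ_m)/(ω_β(n)ω_β(m)) ≤ C(1/(1+n)^β + 1/(1+m)^β) with
C = max{1, 2^{β-1}}, and ∑ 1/(1+n)^{2β} < ∞. -/
theorem chebyshev_operator_algebra (β : ℝ) (hβ : 1 < β)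
    (Ω : ℕ → ℕ → ℝ)
    (hΩ : ∀ n m, Ω n m =
      ((1 / 2) * (1 + ((((n : ℤ) - m).natAbs : ℝ))) ^ β + (1 / 2) * (1 + (n : ℝ) + m) ^ β) /
        ((1 + (n : ℝ)) ^ β * (1 + (m : ℝ)) ^ β)) :
    (∀ n m : ℕ, Ω n m ≤
        max 1 ((2 : ℝ) ^ (β - 1)) * (1 / (1 + (n : ℝ)) ^ β + 1 / (1 + (m : ℝ)) ^ β)) ∧
    Summable fun n : ℕ => 1 / ((1 + (n : ℝ)) ^ (2 * β)) := by
  constructor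
  · intro n m
    set a : ℝ := 1 + n with ha
    set b : ℝ := 1 + m with hb
    have ha0 : (0:ℝ) < a := by positivity
    have hb0 : (0:ℝ) < b := by positivity
    have haβ : (0:ℝ) < a ^ β := Real.rpow_pos_of_pos ha0 β
    have hbβ : (0:ℝ) < b ^ β := Real.rpow_pos_of_pos hb0 β
    set C : ℝ := max 1 ((2:ℝ) ^ (β - 1)) with hC
    have hC1 : (1:ℝ) ≤ C := le_max_left _ _
    have hC2 : (2:ℝ) ^ (β - 1) ≤ C := le_max_right _ _
    -- numerator bound
    have habs : ((((n : ℤ) - m).natAbs : ℝ)) ≤ max (n:ℝ) (m:ℝ) := by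
      rcases le_total n m with h | h
      · have : ((n : ℤ) - m).natAbs = m - n := by omega
        rw [this]
        push_cast [h]
        calc (m:ℝ) - n ≤ (m:ℝ) := by linarith [Nat.cast_nonneg (α := ℝ) n]
          _ ≤ max (n:ℝ) m := le_max_right _ _
      · have : ((n : ℤ) - m).natAbs = n - m := by omega
        rw [this]
        push_cast [h]
        calc (n:ℝ) - m ≤ (n:ℝ) := by linarith [Nat.cast_nonneg (α := ℝ) m]
          _ ≤ max (n:ℝ) m := le_max_left _ _
    have h1 : (1 + ((((n : ℤ) - m).natAbs : ℝ))) ^ β ≤ a ^ β + b ^ β := by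
      have h1' : (1 + ((((n : ℤ) - m).natAbs : ℝ))) ^ β ≤ (max a b) ^ β := by
        apply Real.rpow_le_rpow (by positivity)
        · rcases le_total (n:ℝ) (m:ℝ) with h | h
          · calc 1 + ((((n : ℤ) - m).natAbs : ℝ)) ≤ 1 + max (n:ℝ) m := by linarith
              _ = b := by rw [max_eq_right h]
              _ ≤ max a b := le_max_right _ _
          · calc 1 + ((((n : ℤ) - m).natAbs : ℝ)) ≤ 1 + max (n:ℝ) m := by linarith
              _ = a := by rw [max_eq_left h]
              _ ≤ max a b := le_max_left _ _
        · linarith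
      rcases max_cases a b with ⟨he, _⟩ | ⟨he, _⟩ <;> rw [he] at h1' <;> nlinarith
    have h2 : (1 + (n:ℝ) + m) ^ β ≤ 2 ^ (β - 1) * (a ^ β + b ^ β) := by
      calc (1 + (n:ℝ) + m) ^ β ≤ (a + b) ^ β := by
            apply Real.rpow_le_rpow (by positivity) (by rw [ha, hb]; linarith) (by linarith)
        _ ≤ 2 ^ (β - 1) * (a ^ β + b ^ β) :=
            aux_rpow_add_le a b ha0.le hb0.le hβ.le
    have hnum : (1 / 2) * (1 + ((((n : ℤ) - m).natAbs : ℝ))) ^ β + (1 / 2) * (1 + (n:ℝ) + m) ^ β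
        ≤ C * (a ^ β + b ^ β) := by
      have : (1/2 : ℝ) * (a ^ β + b ^ β) + (1/2) * (2 ^ (β - 1) * (a ^ β + b ^ β))
          ≤ C * (a ^ β + b ^ β) := by nlinarith
      nlinarith
    rw [hΩ]
    rw [div_le_iff₀ (by positivity)]
    calc (1 / 2) * (1 + ((((n : ℤ) - m).natAbs : ℝ))) ^ β + (1 / 2) * (1 + (n:ℝ) + m) ^ β
        ≤ C * (a ^ β + b ^ β) := hnum
      _ = C * (1 / a ^ β + 1 / b ^ β) * (a ^ β * b ^ β) := by field_simp; ring_nf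
  · have h2β : (1:ℝ) < 2 * β := by linarith
    have hs : Summable fun n : ℕ => 1 / (n:ℝ) ^ (2 * β) :=
      Real.summable_one_div_nat_rpow.mpr h2β
    have := (summable_nat_add_iff 1).mpr hs
    refine this.congr fun n => ?_
    push_cast
    ring_nf
end
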